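/- arXiv:1609.09336 — 2 statements merged into one kernel-verified Lean document; each statement's English description precedes it below -/
import Mathlib

section
/- Let r ≥ 1, let α_1,…,α_r be real orders, y_1,…,y_r real numbers with y_s ≠ α_s/2 for each s, and n_1,…,n_r nonnegative integers. If n_1 + ⋯ + n_r is even (so that n_1+⋯+n_r+1 is odd), then (1/(n_1!⋯n_r!)) ∫_0^1 ∏_{s=1}^r E_{n_s}^{(α_s)}((α_s − 2y_s) z + y_s) dz = −2 Σ_{a=0}^{n_1+⋯+n_{r−1}} (−1)^a ((α_r − 2y_r)^{−a−1}/(n_r+a+1)!) E_{n_r+a+1}^{(α_r)}(y_r) · Σ_{j_1+⋯+j_{r−1}=a, 0 ≤ j_s ≤ n_s} (a!/(j_1!⋯j_{r−1}!)) ∏_{s=1}^{r−1} ((α_s − 2y_s)^{j_s}/(n_s − j_s)!) E_{n_s−j_s}^{(α_s)}(y_s). -/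
open Real Finset

/-- Higher-order Euler polynomial `E_m^{(α)}(z)` of real order `α`, defined as the `m`-th
Taylor coefficient (times `m!`) of the generating function `(2/(e^u+1))^α e^{uz}` at `u = 0`. -/
noncomputable def eulerH (α : ℝ) (m : ℕ) (z : ℝ) : ℝ :=
  iteratedDeriv m (fun u : ℝ => (2 / (Real.exp u + 1)) ^ α * Real.exp (u * z)) 0

noncomputable def ghf (α : ℝ) (u : ℝ) : ℝ := (2 / (Real.exp u + 1)) ^ α

lemma contDiff_ghf (α : ℝ) : ContDiff ℝ (⊤ : ℕ∞) (ghf α) := by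
  have hb : ContDiff ℝ (⊤ : ℕ∞) (fun u : ℝ => 2 / (Real.exp u + 1)) := by
    refine ContDiff.div contDiff_const (by fun_prop) ?_
    intro x; positivity
  rw [contDiff_iff_contDiffAt]
  intro x
  exact (Real.contDiffAt_rpow_const_of_ne (by positivity)).comp x hb.contDiffAt

lemma contDiff_exp_mul (z : ℝ) : ContDiff ℝ (⊤ : ℕ∞) (fun u : ℝ => Real.exp (u * z)) := by
  fun_prop

-- Leibniz rule
lemma iteratedDeriv_mul_apply {f g : ℝ → ℝ} (hf : ContDiff ℝ (⊤ : ℕ∞) f) (hg : ContDiff ℝ (⊤ : ℕ∞) g) (n : ℕ) (x : ℝ) :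
    iteratedDeriv n (fun y => f y * g y) x
      = ∑ i ∈ Finset.range (n + 1), (n.choose i : ℝ) * (iteratedDeriv i f x * iteratedDeriv (n - i) g x) := by
  induction n generalizing f g with
  | zero => simp
  | succ n ih =>
    have hf' : ContDiff ℝ (⊤ : ℕ∞) (deriv f) := (contDiff_infty_iff_deriv.mp hf).2
    have hg' : ContDiff ℝ (⊤ : ℕ∞) (deriv g) := (contDiff_infty_iff_deriv.mp hg).2
    have hd : deriv (fun y => f y * g y) = fun y => deriv f y * g y + f y * deriv g y := by
      funext y
      exact deriv_fun_mul (hf.differentiable (by simp) y) (hg.differentiable (by simp) y)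
    rw [iteratedDeriv_succ', hd]
    have hadd : iteratedDeriv n (fun y => deriv f y * g y + f y * deriv g y) x
        = iteratedDeriv n (fun y => deriv f y * g y) x + iteratedDeriv n (fun y => f y * deriv g y) x := by
      rw [show (fun y => deriv f y * g y + f y * deriv g y)
          = (fun y => deriv f y * g y) + (fun y => f y * deriv g y) from rfl]
      simp only [iteratedDeriv_eq_iteratedFDeriv]
      rw [iteratedFDeriv_add_apply (i := n) ((hf'.mul hg).contDiffAt.of_le (mod_cast le_top)) ((hf.mul hg').contDiffAt.of_le (mod_cast le_top))]
      simp
    rw [hadd, ih hf' hg, ih hf hg']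
    rw [Finset.sum_choose_succ_mul (fun i j => iteratedDeriv i f x * iteratedDeriv j g x) n]
    rw [add_comm]
    congr 1
    · refine Finset.sum_congr rfl fun i hi => ?_
      have hi' := Finset.mem_range.mp hi
      rw [← iteratedDeriv_succ', show n - i + 1 = n + 1 - i by omega]
    · exact Finset.sum_congr rfl fun i hi => by rw [← iteratedDeriv_succ']

lemma iteratedDeriv_exp_mul (z : ℝ) (j : ℕ) (x : ℝ) :
    iteratedDeriv j (fun u : ℝ => Real.exp (u * z)) x = z ^ j * Real.exp (x * z) := by
  induction j generalizing x with
  | zero => simp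
  | succ j ih =>
    rw [iteratedDeriv_succ]
    have : deriv (iteratedDeriv j (fun u : ℝ => Real.exp (u * z))) x
        = deriv (fun u : ℝ => z ^ j * Real.exp (u * z)) x := by
      congr 1; funext u; exact ih u
    rw [this]
    have h1 : HasDerivAt (fun u : ℝ => z ^ j * Real.exp (u * z))
        (z ^ j * (Real.exp (x * z) * z)) x := by
      have := (((hasDerivAt_id x).mul_const z).exp).const_mul (z ^ j)
      simpa using this
    rw [h1.deriv]; ring


lemma eulerH_eq_sum (α : ℝ) (m : ℕ) (z : ℝ) :
    eulerH α m z = ∑ i ∈ Finset.range (m + 1),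
      (m.choose i : ℝ) * (iteratedDeriv i (ghf α) 0 * z ^ (m - i)) := by
  rw [eulerH, show (fun u : ℝ => (2 / (Real.exp u + 1)) ^ α * Real.exp (u * z))
      = fun u => ghf α u * Real.exp (u * z) from rfl,
    iteratedDeriv_mul_apply (contDiff_ghf α) (contDiff_exp_mul z) m 0]
  refine Finset.sum_congr rfl fun i _ => ?_
  rw [iteratedDeriv_exp_mul, zero_mul, Real.exp_zero, mul_one]

lemma eulerH_zero (α : ℝ) (z : ℝ) : eulerH α 0 z = 1 := by
  rw [eulerH, iteratedDeriv_zero]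
  norm_num

lemma hasDerivAt_eulerH (α : ℝ) (m : ℕ) (z : ℝ) :
    HasDerivAt (fun z => eulerH α (m + 1) z) ((m + 1 : ℝ) * eulerH α m z) z := by
  have hterm : ∀ i ∈ Finset.range (m + 2), HasDerivAt
      (fun z : ℝ => ((m+1).choose i : ℝ) * (iteratedDeriv i (ghf α) 0 * z ^ (m + 1 - i)))
      (((m+1).choose i : ℝ) * (iteratedDeriv i (ghf α) 0 * ((m + 1 - i : ℕ) * z ^ (m + 1 - i - 1)))) z := by
    intro i _
    exact ((hasDerivAt_pow (m + 1 - i) z).const_mul _).const_mul _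
  have h := HasDerivAt.fun_sum hterm
  have : (fun z => eulerH α (m + 1) z)
      = fun z => ∑ i ∈ Finset.range (m + 2), ((m+1).choose i : ℝ) *
          (iteratedDeriv i (ghf α) 0 * z ^ (m + 1 - i)) := by
    funext w; exact eulerH_eq_sum α (m+1) w
  rw [this]
  refine h.congr_deriv (Eq.symm ?_)
  rw [eulerH_eq_sum, Finset.sum_range_succ (n := m + 1), Finset.mul_sum]
  simp only [Nat.sub_self, Nat.cast_zero, zero_mul, mul_zero, add_zero]
  refine Finset.sum_congr rfl fun i hi => ?_
  have hi' : i ≤ m := by simpa [Nat.lt_succ_iff] using hi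
  have hchoose : ((m+1).choose i : ℝ) * ((m + 1 - i : ℕ) : ℝ) = (m + 1 : ℝ) * (m.choose i : ℝ) := by
    have := Nat.add_one_mul_choose_eq m i
    have h2 := Nat.choose_succ_right_eq (m + 1) i
    have : (m+1).choose i * (m + 1 - i) = (m + 1) * m.choose i := by
      rw [← h2, ← Nat.add_one_mul_choose_eq]
    exact_mod_cast congrArg (Nat.cast : ℕ → ℝ) this
  have hexp : m + 1 - i - 1 = m - i := by omega
  rw [hexp]
  linear_combination -hchoose * (iteratedDeriv i (ghf α) 0 * z ^ (m - i))

lemma eulerH_reflect (α : ℝ) (m : ℕ) (z : ℝ) :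
    eulerH α m (α - z) = (-1 : ℝ) ^ m * eulerH α m z := by
  have key : (fun u : ℝ => ghf α u * Real.exp (u * (α - z)))
      = fun u : ℝ => ghf α (-u) * Real.exp ((-u) * z) := by
    funext u
    have h1 : ghf α (-u) = (2 * Real.exp u / (Real.exp u + 1)) ^ α := by
      rw [ghf]
      congr 1
      rw [Real.exp_neg]
      field_simp
      ring
    have h2 : (2 * Real.exp u / (Real.exp u + 1)) ^ α
        = ghf α u * Real.exp (u * α) := by
      rw [show 2 * Real.exp u / (Real.exp u + 1) = 2 / (Real.exp u + 1) * Real.exp u by ring,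
        Real.mul_rpow (by positivity) (Real.exp_pos u).le, ghf]
      congr 1
      rw [Real.rpow_def_of_pos (Real.exp_pos u), Real.log_exp]
    rw [h1, h2, mul_sub, mul_assoc, ← Real.exp_add]
    ring_nf
  rw [eulerH, show (fun u : ℝ => (2 / (Real.exp u + 1)) ^ α * Real.exp (u * (α - z)))
      = fun u : ℝ => (fun v : ℝ => ghf α v * Real.exp (v * z)) (-u) from key,
    iteratedDeriv_comp_neg m (fun v : ℝ => ghf α v * Real.exp (v * z)) 0, neg_zero, smul_eq_mul]
  rfl

lemma continuous_eulerH_comp (α : ℝ) (m : ℕ) (C y : ℝ) :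
    Continuous (fun z : ℝ => eulerH α m (C * z + y)) := by
  have : (fun z : ℝ => eulerH α m (C * z + y)) = fun z : ℝ => ∑ i ∈ Finset.range (m + 1),
      (m.choose i : ℝ) * (iteratedDeriv i (ghf α) 0 * (C * z + y) ^ (m - i)) := by
    funext w; exact eulerH_eq_sum α m (C * w + y)
  rw [this]
  exact continuous_finset_sum _ fun i _ => by fun_prop

lemma hasDerivAt_eulerH_comp (α : ℝ) (m : ℕ) (C y z : ℝ) :
    HasDerivAt (fun z : ℝ => eulerH α (m + 1) (C * z + y))
      ((m + 1 : ℝ) * eulerH α m (C * z + y) * C) z :=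
  (hasDerivAt_eulerH α m (C * z + y)).comp z (h := fun z => C * z + y)
    (by simpa using ((hasDerivAt_id z).const_mul C).add_const y)

lemma cont_of_hasDerivAt {f g : ℝ → ℝ} (h : ∀ x, HasDerivAt f (g x) x) : Continuous f := by
  have : Differentiable ℝ f := fun x => (h x).differentiableAt
  exact this.continuous

lemma ibp_engine : ∀ (M : ℕ) (F G : ℕ → ℝ → ℝ),
    (∀ a, a ≤ M → ∀ x, HasDerivAt (F a) (F (a + 1) x) x) →
    (∀ x, F (M + 1) x = 0) →
    (∀ j, j ≤ M → ∀ x, HasDerivAt (G (j + 1)) (G j x) x) →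
    Continuous (G 0) →
    ∫ z in (0:ℝ)..1, F 0 z * G 0 z
      = ∑ a ∈ Finset.range (M + 1), (-1 : ℝ) ^ a *
          (F a 1 * G (a + 1) 1 - F a 0 * G (a + 1) 0) := by
  intro M
  induction M with
  | zero =>
    intro F G hF hFM hG hGc
    have hder : ∀ x ∈ Set.uIcc (0:ℝ) 1, HasDerivAt (fun t => F 0 t * G 1 t) (F 0 x * G 0 x) x := by
      intro x _
      have h := (hF 0 le_rfl x).fun_mul (hG 0 le_rfl x)
      simpa [hFM x] using h
    have hFc : Continuous (F 0) := cont_of_hasDerivAt (fun x => hF 0 le_rfl x)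
    have hcont : Continuous (fun x => F 0 x * G 0 x) := hFc.mul hGc
    rw [intervalIntegral.integral_eq_sub_of_hasDerivAt hder (hcont.intervalIntegrable 0 1)]
    simp
  | succ M ih =>
    intro F G hF hFM hG hGc
    have hFc : ∀ a, a ≤ M + 1 → Continuous (F a) :=
      fun a ha => cont_of_hasDerivAt (fun x => hF a ha x)
    have hGc' : ∀ j, 1 ≤ j → j ≤ M + 2 → Continuous (G j) := by
      intro j h1 h2
      cases j with
      | zero => omega
      | succ j' => exact cont_of_hasDerivAt (fun x => hG j' (by omega) x)
    have hIH := ih (fun a => F (a + 1)) (fun j => G (j + 1))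
      (fun a ha x => hF (a + 1) (by omega) x)
      (fun x => hFM x)
      (fun j hj x => hG (j + 1) (by omega) x)
      (hGc' 1 le_rfl (by omega))
    have hder : ∀ x ∈ Set.uIcc (0:ℝ) 1, HasDerivAt (fun t => F 0 t * G 1 t)
        (F 1 x * G 1 x + F 0 x * G 0 x) x := by
      intro x _
      exact (hF 0 (by omega) x).mul (hG 0 (by omega) x)
    have hc1 : Continuous (fun x => F 1 x * G 1 x) :=
      (hFc 1 (by omega)).mul (hGc' 1 le_rfl (by omega))
    have hc0 : Continuous (fun x => F 0 x * G 0 x) := (hFc 0 (by omega)).mul hGc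
    have hFTC := intervalIntegral.integral_eq_sub_of_hasDerivAt hder
      ((hc1.add hc0).intervalIntegrable 0 1)
    rw [intervalIntegral.integral_add (hc1.intervalIntegrable 0 1)
      (hc0.intervalIntegrable 0 1)] at hFTC
    have key : ∫ z in (0:ℝ)..1, F 0 z * G 0 z
        = (F 0 1 * G 1 1 - F 0 0 * G 1 0) - ∫ z in (0:ℝ)..1, F 1 z * G 1 z := by
      linarith [hFTC]
    rw [key, hIH, Finset.sum_range_succ' _ (M + 1), sub_eq_add_neg, add_comm,
      ← Finset.sum_neg_distrib]
    congr 1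
    · exact Finset.sum_congr rfl fun a _ => by ring
    · simp

noncomputable def gfac (A Y : ℝ) (Nn m : ℕ) (z : ℝ) : ℝ :=
  (A - 2 * Y) ^ m * eulerH A (Nn - m) ((A - 2 * Y) * z + Y) / ((Nn - m).factorial : ℝ)

lemma hasDerivAt_gfac (A Y : ℝ) (Nn m : ℕ) (hm : m ≤ Nn) (z : ℝ) :
    HasDerivAt (fun z => gfac A Y Nn m z) (if m < Nn then gfac A Y Nn (m + 1) z else 0) z := by
  by_cases h : m < Nn
  · simp only [if_pos h]
    obtain ⟨m', hm'⟩ : ∃ m', Nn - m = m' + 1 := ⟨Nn - m - 1, by omega⟩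
    have h1 : (fun z => gfac A Y Nn m z)
        = fun z => ((A - 2*Y) ^ m / (((Nn - m).factorial : ℝ))) *
            eulerH A (m' + 1) ((A - 2*Y) * z + Y) := by
      funext w; rw [gfac, hm']; ring
    rw [h1]
    have h2 := (hasDerivAt_eulerH_comp A m' (A - 2*Y) Y z).const_mul
      ((A - 2*Y) ^ m / (((Nn - m).factorial : ℝ)))
    refine h2.congr_deriv (Eq.symm ?_)
    rw [gfac, show Nn - (m + 1) = m' by omega, hm', Nat.factorial_succ]
    have hfac : ((m'.factorial : ℝ)) ≠ 0 := Nat.cast_ne_zero.mpr m'.factorial_ne_zero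
    have hfac2 : ((m' : ℝ) + 1) ≠ 0 := by positivity
    field_simp
    push_cast
    ring
  · simp only [if_neg h]
    have h1 : (fun z => gfac A Y Nn m z) = fun _ => (A - 2*Y) ^ m := by
      funext w; rw [gfac, show Nn - m = 0 by omega, eulerH_zero]
      simp
    rw [h1]; exact hasDerivAt_const z _

lemma multinomial_real {k : ℕ} (g : Fin k → ℕ) :
    (Nat.multinomial Finset.univ g : ℝ)
      = ((∑ i, g i).factorial : ℝ) / ∏ i, ((g i).factorial : ℝ) := by
  have h := Nat.multinomial_spec Finset.univ g
  have h2 : ((∏ i, (g i).factorial : ℕ) : ℝ) * (Nat.multinomial Finset.univ g : ℝ)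
      = ((∑ i, g i).factorial : ℝ) := by exact_mod_cast congrArg (Nat.cast : ℕ → ℝ) h
  have hne : (∏ i, ((g i).factorial : ℝ)) ≠ 0 := by
    refine Finset.prod_ne_zero_iff.mpr fun i _ => ?_
    exact Nat.cast_ne_zero.mpr (g i).factorial_ne_zero
  push_cast at h2
  field_simp
  linarith [h2]

lemma multinomial_rec {k : ℕ} (g : Fin k → ℕ) (hpos : 0 < ∑ i, g i) :
    (Nat.multinomial Finset.univ g : ℝ)
      = ∑ i ∈ Finset.univ.filter (fun i => 0 < g i),
          (Nat.multinomial Finset.univ (Function.update g i (g i - 1)) : ℝ) := by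
  have hPne : (∏ x, ((g x).factorial : ℝ)) ≠ 0 :=
    Finset.prod_ne_zero_iff.mpr fun i _ => Nat.cast_ne_zero.mpr (g i).factorial_ne_zero
  have hrw : ∀ i ∈ Finset.univ.filter (fun i => 0 < g i),
      (Nat.multinomial Finset.univ (Function.update g i (g i - 1)) : ℝ)
        = (((∑ x, g x) - 1).factorial : ℝ) * (g i : ℝ) / ∏ x, ((g x).factorial : ℝ) := by
    intro i hi
    have hgi : 0 < g i := (Finset.mem_filter.mp hi).2
    rw [multinomial_real]
    have hsum_er : ∑ x ∈ Finset.univ.erase i, g x + g i = ∑ x, g x :=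
      Finset.sum_erase_add _ _ (Finset.mem_univ i)
    have hsum : ∑ x, Function.update g i (g i - 1) x = (∑ x, g x) - 1 := by
      rw [Finset.sum_update_of_mem (Finset.mem_univ i)]
      have : ∑ x ∈ Finset.univ \ {i}, g x = ∑ x ∈ Finset.univ.erase i, g x := by
        rw [Finset.sdiff_singleton_eq_erase]
      omega
    have hprod : ∏ x, ((Function.update g i (g i - 1) x).factorial : ℝ)
        = ((g i - 1).factorial : ℝ) * ∏ x ∈ Finset.univ.erase i, ((g x).factorial : ℝ) := by
      rw [show (fun x => ((Function.update g i (g i - 1) x).factorial : ℝ))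
          = Function.update (fun x => ((g x).factorial : ℝ)) i ((g i - 1).factorial : ℝ) by
        funext x
        by_cases hx : x = i
        · subst hx; simp
        · simp [Function.update_of_ne hx]]
      rw [Finset.prod_update_of_mem (Finset.mem_univ i), Finset.sdiff_singleton_eq_erase]
    have hP : (∏ x, ((g x).factorial : ℝ))
        = ((g i).factorial : ℝ) * ∏ x ∈ Finset.univ.erase i, ((g x).factorial : ℝ) :=
      (Finset.mul_prod_erase _ _ (Finset.mem_univ i)).symm
    have hfac : ((g i - 1).factorial : ℝ) * (g i : ℝ) = ((g i).factorial : ℝ) := by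
      have := Nat.mul_factorial_pred hgi.ne'
      exact_mod_cast by rw [mul_comm]; exact_mod_cast congrArg (Nat.cast : ℕ → ℝ) this
    have hprodne : (∏ x ∈ Finset.univ.erase i, ((g x).factorial : ℝ)) ≠ 0 :=
      Finset.prod_ne_zero_iff.mpr fun x _ => Nat.cast_ne_zero.mpr (g x).factorial_ne_zero
    rw [hsum, hprod, hP]
    rw [div_eq_div_iff (by positivity) (by positivity)]
    calc (((∑ x, g x) - 1).factorial : ℝ) * (((g i).factorial : ℝ) * ∏ x ∈ Finset.univ.erase i, ((g x).factorial : ℝ))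
        = (((∑ x, g x) - 1).factorial : ℝ) * ((((g i - 1).factorial : ℝ) * (g i : ℝ)) * ∏ x ∈ Finset.univ.erase i, ((g x).factorial : ℝ)) := by rw [hfac]
      _ = (((∑ x, g x) - 1).factorial : ℝ) * (g i : ℝ) * (((g i - 1).factorial : ℝ) * ∏ x ∈ Finset.univ.erase i, ((g x).factorial : ℝ)) := by ring
  rw [Finset.sum_congr rfl hrw, multinomial_real]
  have hsumg : ∑ i ∈ Finset.univ.filter (fun i => 0 < g i), (g i : ℝ) = ((∑ i, g i : ℕ) : ℝ) := by
    push_cast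
    rw [Finset.sum_filter_of_ne]
    intro x _ hx
    have : g x ≠ 0 := by exact_mod_cast hx
    omega
  have : ∑ i ∈ Finset.univ.filter (fun i => 0 < g i),
      (((∑ x, g x) - 1).factorial : ℝ) * (g i : ℝ) / ∏ x, ((g x).factorial : ℝ)
      = (((∑ x, g x) - 1).factorial : ℝ) * ((∑ i, g i : ℕ) : ℝ) / ∏ x, ((g x).factorial : ℝ) := by
    rw [← Finset.sum_div, ← Finset.mul_sum, hsumg]
  rw [this]
  have hfacS : (((∑ x, g x) - 1).factorial : ℝ) * ((∑ i, g i : ℕ) : ℝ) = ((∑ x, g x).factorial : ℝ) := by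
    have := Nat.mul_factorial_pred hpos.ne'
    rw [mul_comm]
    exact_mod_cast congrArg (Nat.cast : ℕ → ℝ) this
  rw [hfacS]

noncomputable def Ffun (k : ℕ) (A Y : Fin k → ℝ) (N : Fin k → ℕ) (a : ℕ) (z : ℝ) : ℝ :=
  ∑ j ∈ (Finset.Nat.antidiagonalTuple k a).filter (fun j => ∀ i, j i ≤ N i),
    (Nat.multinomial Finset.univ j : ℝ) * ∏ i, gfac (A i) (Y i) (N i) (j i) z

lemma prod_update_gfac {k : ℕ} (A Y : Fin k → ℝ) (N : Fin k → ℕ) (j : Fin k → ℕ)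
    (i : Fin k) (v : ℕ) (z : ℝ) :
    ∏ i', gfac (A i') (Y i') (N i') (Function.update j i v i') z
      = gfac (A i) (Y i) (N i) v z * ∏ i' ∈ Finset.univ.erase i, gfac (A i') (Y i') (N i') (j i') z := by
  classical
  have : (fun i' => gfac (A i') (Y i') (N i') (Function.update j i v i') z)
      = Function.update (fun i' => gfac (A i') (Y i') (N i') (j i') z) i
          (gfac (A i) (Y i) (N i) v z) := by
    funext x
    by_cases hx : x = i
    · subst hx; simp
    · simp [Function.update_of_ne hx]
  rw [this, Finset.prod_update_of_mem (Finset.mem_univ i), Finset.sdiff_singleton_eq_erase]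

lemma sum_update_add {k : ℕ} (j : Fin k → ℕ) (i : Fin k) (v : ℕ) :
    (∑ x, Function.update j i v x) + j i = v + ∑ x, j x := by
  classical
  rw [Finset.sum_update_of_mem (Finset.mem_univ i), Finset.sdiff_singleton_eq_erase]
  have h := Finset.sum_erase_add Finset.univ j (Finset.mem_univ i)
  omega

lemma hasDerivAt_Ffun {k : ℕ} (A Y : Fin k → ℝ) (N : Fin k → ℕ) (a : ℕ) (z : ℝ) :
    HasDerivAt (fun z => Ffun k A Y N a z) (Ffun k A Y N (a + 1) z) z := by
  classical
  have hprod : ∀ j ∈ (Finset.Nat.antidiagonalTuple k a).filter (fun j => ∀ i, j i ≤ N i),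
      HasDerivAt (fun z => ∏ i, gfac (A i) (Y i) (N i) (j i) z)
      (∑ i, (∏ i' ∈ Finset.univ.erase i, gfac (A i') (Y i') (N i') (j i') z) *
        (if j i < N i then gfac (A i) (Y i) (N i) (j i + 1) z else 0)) z := by
    intro j hj
    have hle : ∀ i, j i ≤ N i := (Finset.mem_filter.mp hj).2
    have h := HasDerivAt.fun_finsetProd (u := Finset.univ)
      (f := fun i z => gfac (A i) (Y i) (N i) (j i) z)
      (f' := fun i => if j i < N i then gfac (A i) (Y i) (N i) (j i + 1) z else 0)
      (x := z) (fun i _ => hasDerivAt_gfac _ _ _ _ (hle i) z)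
    simpa [smul_eq_mul] using h
  have hD := HasDerivAt.fun_sum (fun j hj => ((hprod j hj).const_mul
    ((Nat.multinomial Finset.univ j : ℝ))))
  have halg : Ffun k A Y N (a + 1) z
      = ∑ j ∈ (Finset.Nat.antidiagonalTuple k a).filter (fun j => ∀ i, j i ≤ N i),
          (Nat.multinomial Finset.univ j : ℝ) *
            ∑ i, (∏ i' ∈ Finset.univ.erase i, gfac (A i') (Y i') (N i') (j i') z) *
              (if j i < N i then gfac (A i) (Y i) (N i) (j i + 1) z else 0) := by
    have hRHS : ∀ j ∈ (Finset.Nat.antidiagonalTuple k a).filter (fun j => ∀ i, j i ≤ N i),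
        (Nat.multinomial Finset.univ j : ℝ) *
            (∑ i, (∏ i' ∈ Finset.univ.erase i, gfac (A i') (Y i') (N i') (j i') z) *
              (if j i < N i then gfac (A i) (Y i) (N i) (j i + 1) z else 0))
          = ∑ i ∈ Finset.univ.filter (fun i => j i < N i),
              (Nat.multinomial Finset.univ j : ℝ) *
                ∏ i', gfac (A i') (Y i') (N i') (Function.update j i (j i + 1) i') z := by
      intro j hj
      rw [Finset.mul_sum, Finset.sum_filter]
      refine Finset.sum_congr rfl fun i _ => ?_
      by_cases hlt : j i < N i
      · rw [if_pos hlt, if_pos hlt, prod_update_gfac]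
        ring
      · simp [hlt]
    have hLHS : Ffun k A Y N (a + 1) z
        = ∑ j' ∈ (Finset.Nat.antidiagonalTuple k (a + 1)).filter (fun j => ∀ i, j i ≤ N i),
            ∑ i ∈ Finset.univ.filter (fun i => 0 < j' i),
              (Nat.multinomial Finset.univ (Function.update j' i (j' i - 1)) : ℝ) *
                ∏ i', gfac (A i') (Y i') (N i') (j' i') z := by
      rw [Ffun]
      refine Finset.sum_congr rfl fun j' hj' => ?_
      have hsum : ∑ i, j' i = a + 1 :=
        Finset.Nat.mem_antidiagonalTuple.mp (Finset.mem_filter.mp hj').1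
      rw [multinomial_rec j' (by omega), Finset.sum_mul]
    rw [hLHS, Finset.sum_congr rfl hRHS, Finset.sum_sigma', Finset.sum_sigma']
    refine (Finset.sum_nbij' (i := fun p => (⟨Function.update p.1 p.2 (p.1 p.2 + 1), p.2⟩ :
        (_ : Fin k → ℕ) × Fin k))
      (j := fun p => (⟨Function.update p.1 p.2 (p.1 p.2 - 1), p.2⟩ :
        (_ : Fin k → ℕ) × Fin k)) ?_ ?_ ?_ ?_ ?_).symm
    · -- up maps S1 → S2
      rintro ⟨j, i⟩ hp
      simp only [Finset.mem_sigma, Finset.mem_filter, Finset.mem_univ, true_and,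
        Finset.Nat.mem_antidiagonalTuple] at hp ⊢
      obtain ⟨⟨hsum, hle⟩, hlt⟩ := hp
      have hupd := sum_update_add j i (j i + 1)
      refine ⟨⟨by omega, ?_⟩, ?_⟩
      · intro x
        by_cases hx : x = i
        · subst hx; simp only [Function.update_self]; omega
        · rw [Function.update_of_ne hx]; exact hle x
      · simp only [Function.update_self]; omega
    · -- down maps S2 → S1
      rintro ⟨j', i⟩ hp
      simp only [Finset.mem_sigma, Finset.mem_filter, Finset.mem_univ, true_and,
        Finset.Nat.mem_antidiagonalTuple] at hp ⊢
      obtain ⟨⟨hsum, hle⟩, hpos⟩ := hp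
      have hupd := sum_update_add j' i (j' i - 1)
      have hlei := hle i
      refine ⟨⟨by omega, ?_⟩, ?_⟩
      · intro x
        by_cases hx : x = i
        · subst hx; simp only [Function.update_self]; omega
        · rw [Function.update_of_ne hx]; exact hle x
      · simp only [Function.update_self]; omega
    · -- left inverse : down (up p) = p
      rintro ⟨j, i⟩ _
      have h1 : Function.update (Function.update j i (j i + 1)) i
          (Function.update j i (j i + 1) i - 1) = j := by
        funext x
        by_cases hx : x = i
        · subst hx; simp only [Function.update_self]; omega
        · simp [Function.update_of_ne hx]
      simp only [Sigma.mk.inj_iff, heq_eq_eq]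
      exact ⟨h1, trivial⟩
    · -- right inverse : up (down p) = p
      rintro ⟨j', i⟩ hp
      simp only [Finset.mem_sigma, Finset.mem_filter, Finset.mem_univ, true_and] at hp
      have hpos : 0 < j' i := hp.2
      have h1 : Function.update (Function.update j' i (j' i - 1)) i
          (Function.update j' i (j' i - 1) i + 1) = j' := by
        funext x
        by_cases hx : x = i
        · subst hx; simp only [Function.update_self]; omega
        · simp [Function.update_of_ne hx]
      simp only [Sigma.mk.inj_iff, heq_eq_eq]
      exact ⟨h1, trivial⟩
    · -- values agree
      rintro ⟨j, i⟩ _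
      have hdu : Function.update (Function.update j i (j i + 1)) i
          (Function.update j i (j i + 1) i - 1) = j := by
        funext x
        by_cases hx : x = i
        · subst hx; simp only [Function.update_self]; omega
        · simp [Function.update_of_ne hx]
      rw [hdu]
  rw [show (fun z => Ffun k A Y N a z) = fun z =>
      ∑ j ∈ (Finset.Nat.antidiagonalTuple k a).filter (fun j => ∀ i, j i ≤ N i),
        (Nat.multinomial Finset.univ j : ℝ) * ∏ i, gfac (A i) (Y i) (N i) (j i) z from rfl,
    halg]
  exact hD

noncomputable def Qfun (A Y : ℝ) (Nn j : ℕ) (z : ℝ) : ℝ :=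
  eulerH A (Nn + j) ((A - 2 * Y) * z + Y) / (((Nn + j).factorial : ℝ) * (A - 2 * Y) ^ j)

lemma hasDerivAt_Qfun (A Y : ℝ) (hC : A - 2 * Y ≠ 0) (Nn j : ℕ) (z : ℝ) :
    HasDerivAt (fun z => Qfun A Y Nn (j + 1) z) (Qfun A Y Nn j z) z := by
  have h1 : (fun z => Qfun A Y Nn (j + 1) z)
      = fun z => (1 / (((Nn + j + 1).factorial : ℝ) * (A - 2 * Y) ^ (j + 1))) *
          eulerH A ((Nn + j) + 1) ((A - 2 * Y) * z + Y) := by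
    funext w
    rw [Qfun, show Nn + (j + 1) = (Nn + j) + 1 by ring]
    ring
  rw [h1]
  have h2 := (hasDerivAt_eulerH_comp A (Nn + j) (A - 2 * Y) Y z).const_mul
    (1 / (((Nn + j + 1).factorial : ℝ) * (A - 2 * Y) ^ (j + 1)))
  refine h2.congr_deriv (Eq.symm ?_)
  rw [Qfun, Nat.factorial_succ]
  have hfne : ((Nn + j).factorial : ℝ) ≠ 0 := Nat.cast_ne_zero.mpr (Nn + j).factorial_ne_zero
  have hCp : (A - 2 * Y) ^ j ≠ 0 := pow_ne_zero _ hC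
  push_cast
  field_simp
  ring

lemma Ffun_eq_zero {k : ℕ} (A Y : Fin k → ℝ) (N : Fin k → ℕ) (a : ℕ)
    (ha : (∑ i, N i) < a) (z : ℝ) : Ffun k A Y N a z = 0 := by
  rw [Ffun]
  convert Finset.sum_empty
  rw [Finset.filter_eq_empty_iff]
  intro j hj
  have hsum : ∑ i, j i = a := Finset.Nat.mem_antidiagonalTuple.mp hj
  intro hle
  have : ∑ i, j i ≤ ∑ i, N i := Finset.sum_le_sum fun i _ => hle i
  omega

lemma gfac_one {A Y : ℝ} {Nn m : ℕ} :
    gfac A Y Nn m 1 = (-1 : ℝ) ^ (Nn - m) * gfac A Y Nn m 0 := by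
  rw [gfac, gfac, show (A - 2 * Y) * 1 + Y = A - Y by ring, show (A - 2 * Y) * 0 + Y = Y by ring,
    eulerH_reflect]
  ring

lemma Ffun_one {k : ℕ} (A Y : Fin k → ℝ) (N : Fin k → ℕ) (a : ℕ) (_ha : a ≤ ∑ i, N i) :
    Ffun k A Y N a 1 = (-1 : ℝ) ^ ((∑ i, N i) - a) * Ffun k A Y N a 0 := by
  rw [Ffun, Ffun, Finset.mul_sum]
  refine Finset.sum_congr rfl fun j hj => ?_
  have hsum : ∑ i, j i = a := Finset.Nat.mem_antidiagonalTuple.mp (Finset.mem_filter.mp hj).1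
  have hle : ∀ i, j i ≤ N i := (Finset.mem_filter.mp hj).2
  have hprod : ∏ i, gfac (A i) (Y i) (N i) (j i) 1
      = (-1 : ℝ) ^ ((∑ i, N i) - a) * ∏ i, gfac (A i) (Y i) (N i) (j i) 0 := by
    rw [show (∏ i, gfac (A i) (Y i) (N i) (j i) 1)
        = ∏ i, ((-1 : ℝ) ^ (N i - j i) * gfac (A i) (Y i) (N i) (j i) 0) from
      Finset.prod_congr rfl fun i _ => gfac_one]
    rw [Finset.prod_mul_distrib, Finset.prod_pow_eq_pow_sum]
    congr 2
    rw [← hsum, Finset.sum_tsub_distrib _ (fun i _ => hle i)]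
  rw [hprod]
  ring

lemma Qfun_one (A Y : ℝ) (Nn j : ℕ) :
    Qfun A Y Nn j 1 = (-1 : ℝ) ^ (Nn + j) * Qfun A Y Nn j 0 := by
  rw [Qfun, Qfun, show (A - 2 * Y) * 1 + Y = A - Y by ring, show (A - 2 * Y) * 0 + Y = Y by ring,
    eulerH_reflect]
  ring

/-- STATEMENT 6, with `r = k + 1 ≥ 1`; the first `r - 1` indices are the `i.castSucc` for
`i : Fin k` and the last index is `Fin.last k`. Terms of the inner sum in which some
`j s > n s` are taken to be zero (implemented by filtering them out). -/
theorem stmt_6 (k : ℕ) (α y : Fin (k + 1) → ℝ) (hy : ∀ s, y s ≠ α s / 2)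
    (n : Fin (k + 1) → ℕ) (heven : Even (∑ s, n s)) :
    (1 / ∏ s, ((n s).factorial : ℝ)) *
        ∫ z in (0 : ℝ)..1, ∏ s, eulerH (α s) (n s) ((α s - 2 * y s) * z + y s)
      = -2 * ∑ a ∈ Finset.range ((∑ i : Fin k, n i.castSucc) + 1), (-1 : ℝ) ^ a *
          ((α (Fin.last k) - 2 * y (Fin.last k)) ^ (-(a : ℤ) - 1) /
            ((n (Fin.last k) + a + 1).factorial : ℝ)) *
          eulerH (α (Fin.last k)) (n (Fin.last k) + a + 1) (y (Fin.last k)) *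
          ∑ j ∈ (Finset.Nat.antidiagonalTuple k a).filter
              (fun j => ∀ i, j i ≤ n i.castSucc),
            ((a.factorial : ℝ) / ∏ i, ((j i).factorial : ℝ)) *
            ∏ i, ((α i.castSucc - 2 * y i.castSucc) ^ (j i) /
                ((n i.castSucc - j i).factorial : ℝ)) *
              eulerH (α i.castSucc) (n i.castSucc - j i) (y i.castSucc) := by
  classical
  have hCL : α (Fin.last k) - 2 * y (Fin.last k) ≠ 0 := by
    intro h; exact hy (Fin.last k) (by linarith)
  have hF : ∀ a, a ≤ (∑ i : Fin k, n i.castSucc) → ∀ x, HasDerivAt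
      (Ffun k (fun i => α i.castSucc) (fun i => y i.castSucc) (fun i => n i.castSucc) a)
      (Ffun k (fun i => α i.castSucc) (fun i => y i.castSucc) (fun i => n i.castSucc) (a + 1) x) x :=
    fun a _ x => hasDerivAt_Ffun _ _ _ a x
  have hFM : ∀ x, Ffun k (fun i => α i.castSucc) (fun i => y i.castSucc)
      (fun i => n i.castSucc) ((∑ i : Fin k, n i.castSucc) + 1) x = 0 :=
    fun x => Ffun_eq_zero _ _ _ _ (by omega) x
  have hG : ∀ j, j ≤ (∑ i : Fin k, n i.castSucc) → ∀ x, HasDerivAt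
      (Qfun (α (Fin.last k)) (y (Fin.last k)) (n (Fin.last k)) (j + 1))
      (Qfun (α (Fin.last k)) (y (Fin.last k)) (n (Fin.last k)) j x) x :=
    fun j _ x => hasDerivAt_Qfun _ _ hCL _ _ x
  have hGc : Continuous (fun z => Qfun (α (Fin.last k)) (y (Fin.last k)) (n (Fin.last k)) 0 z) := by
    have h := (continuous_eulerH_comp (α (Fin.last k)) (n (Fin.last k) + 0)
      (α (Fin.last k) - 2 * y (Fin.last k)) (y (Fin.last k))).div_const
      (((n (Fin.last k) + 0).factorial : ℝ) * (α (Fin.last k) - 2 * y (Fin.last k)) ^ 0)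
    simpa [Qfun] using h
  have hmain := ibp_engine (∑ i : Fin k, n i.castSucc)
    (Ffun k (fun i => α i.castSucc) (fun i => y i.castSucc) (fun i => n i.castSucc))
    (Qfun (α (Fin.last k)) (y (Fin.last k)) (n (Fin.last k)))
    hF hFM hG hGc
  -- pointwise identification of the integrand
  have hL1 : ∀ z : ℝ, Ffun k (fun i => α i.castSucc) (fun i => y i.castSucc)
        (fun i => n i.castSucc) 0 z *
        Qfun (α (Fin.last k)) (y (Fin.last k)) (n (Fin.last k)) 0 z
      = (1 / ∏ s, ((n s).factorial : ℝ)) *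
          ∏ s, eulerH (α s) (n s) ((α s - 2 * y s) * z + y s) := by
    intro z
    have hfil : ((Finset.Nat.antidiagonalTuple k 0).filter
        (fun j : Fin k → ℕ => ∀ i, j i ≤ n i.castSucc)) = {0} := by
      rw [Finset.Nat.antidiagonalTuple_zero_right]
      refine Finset.filter_true_of_mem fun j hj => ?_
      rw [Finset.mem_singleton.mp hj]
      exact fun i => Nat.zero_le _
    rw [Ffun, hfil, Finset.sum_singleton]
    have hm : (Nat.multinomial Finset.univ (0 : Fin k → ℕ) : ℝ) = 1 := by
      rw [multinomial_real]; simp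
    have h1 : ∏ i : Fin k, gfac (α i.castSucc) (y i.castSucc) (n i.castSucc)
          ((0 : Fin k → ℕ) i) z
        = (∏ i : Fin k, eulerH (α i.castSucc) (n i.castSucc)
            ((α i.castSucc - 2 * y i.castSucc) * z + y i.castSucc)) /
          ∏ i : Fin k, ((n i.castSucc).factorial : ℝ) := by
      rw [← Finset.prod_div_distrib]
      refine Finset.prod_congr rfl fun i _ => ?_
      rw [gfac]
      simp
    rw [hm, one_mul, h1, Qfun,
      Fin.prod_univ_castSucc (f := fun s => eulerH (α s) (n s) ((α s - 2 * y s) * z + y s)),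
      Fin.prod_univ_castSucc (f := fun s => ((n s).factorial : ℝ))]
    have hne1 : (∏ i : Fin k, ((n i.castSucc).factorial : ℝ)) ≠ 0 :=
      Finset.prod_ne_zero_iff.mpr fun i _ => Nat.cast_ne_zero.mpr (Nat.factorial_ne_zero _)
    have hne2 : ((n (Fin.last k)).factorial : ℝ) ≠ 0 :=
      Nat.cast_ne_zero.mpr (Nat.factorial_ne_zero _)
    rw [Nat.add_zero, pow_zero, mul_one]
    field_simp
    exact (mul_comm _ _).trans (congrArg _ (Finset.prod_congr rfl fun i _ => by ring_nf))
  have hLHSint : ∫ z in (0:ℝ)..1,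
        Ffun k (fun i => α i.castSucc) (fun i => y i.castSucc) (fun i => n i.castSucc) 0 z *
        Qfun (α (Fin.last k)) (y (Fin.last k)) (n (Fin.last k)) 0 z
      = (1 / ∏ s, ((n s).factorial : ℝ)) *
          ∫ z in (0:ℝ)..1, ∏ s, eulerH (α s) (n s) ((α s - 2 * y s) * z + y s) := by
    rw [← intervalIntegral.integral_const_mul]
    exact intervalIntegral.integral_congr fun z _ => hL1 z
  rw [← hLHSint, hmain, Finset.mul_sum]
  refine Finset.sum_congr rfl fun a ha => ?_
  have haN : a ≤ ∑ i : Fin k, n i.castSucc := by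
    simpa [Nat.lt_succ_iff] using Finset.mem_range.mp ha
  -- boundary reflections
  rw [Ffun_one _ _ _ a haN, Qfun_one]
  have hodd : Odd ((∑ i : Fin k, n i.castSucc) - a + (n (Fin.last k) + (a + 1))) := by
    have hsum : (∑ s, n s) = (∑ i : Fin k, n i.castSucc) + n (Fin.last k) :=
      Fin.sum_univ_castSucc n
    rw [hsum] at heven
    have : (∑ i : Fin k, n i.castSucc) - a + (n (Fin.last k) + (a + 1))
        = ((∑ i : Fin k, n i.castSucc) + n (Fin.last k)) + 1 := by omega
    rw [this]
    exact Even.add_one heven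
  have hsign : (-1 : ℝ) ^ ((∑ i : Fin k, n i.castSucc) - a) *
      (-1 : ℝ) ^ (n (Fin.last k) + (a + 1)) = -1 := by
    rw [← pow_add]
    exact Odd.neg_one_pow hodd
  -- identify F a 0 with the inner sum
  have hFa0 : Ffun k (fun i => α i.castSucc) (fun i => y i.castSucc)
        (fun i => n i.castSucc) a 0
      = ∑ j ∈ (Finset.Nat.antidiagonalTuple k a).filter
            (fun j => ∀ i, j i ≤ n i.castSucc),
          ((a.factorial : ℝ) / ∏ i, ((j i).factorial : ℝ)) *
          ∏ i, ((α i.castSucc - 2 * y i.castSucc) ^ (j i) /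
              ((n i.castSucc - j i).factorial : ℝ)) *
            eulerH (α i.castSucc) (n i.castSucc - j i) (y i.castSucc) := by
    rw [Ffun]
    refine Finset.sum_congr rfl fun j hj => ?_
    have hsum : ∑ i, j i = a :=
      Finset.Nat.mem_antidiagonalTuple.mp (Finset.mem_filter.mp hj).1
    rw [multinomial_real, hsum]
    congr 1
    refine Finset.prod_congr rfl fun i _ => ?_
    rw [gfac, show (α i.castSucc - 2 * y i.castSucc) * 0 + y i.castSucc = y i.castSucc by ring]
    ring
  -- identify G (a+1) 0
  have hGa0 : Qfun (α (Fin.last k)) (y (Fin.last k)) (n (Fin.last k)) (a + 1) 0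
      = (α (Fin.last k) - 2 * y (Fin.last k)) ^ (-(a : ℤ) - 1) /
          ((n (Fin.last k) + a + 1).factorial : ℝ) *
        eulerH (α (Fin.last k)) (n (Fin.last k) + a + 1) (y (Fin.last k)) := by
    rw [Qfun, show (α (Fin.last k) - 2 * y (Fin.last k)) * 0 + y (Fin.last k)
        = y (Fin.last k) by ring,
      show n (Fin.last k) + (a + 1) = n (Fin.last k) + a + 1 by ring,
      show (-(a : ℤ) - 1) = -((a + 1 : ℕ) : ℤ) by push_cast; ring,
      zpow_neg, zpow_natCast]
    have hfne : ((n (Fin.last k) + a + 1).factorial : ℝ) ≠ 0 :=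
      Nat.cast_ne_zero.mpr (Nat.factorial_ne_zero _)
    have hCp : (α (Fin.last k) - 2 * y (Fin.last k)) ^ (a + 1) ≠ 0 := pow_ne_zero _ hCL
    field_simp
  rw [hFa0, hGa0] at *
  -- final ring manipulation
  linear_combination ((-1 : ℝ) ^ a *
    ((α (Fin.last k) - 2 * y (Fin.last k)) ^ (-(a : ℤ) - 1) /
          ((n (Fin.last k) + a + 1).factorial : ℝ) *
        eulerH (α (Fin.last k)) (n (Fin.last k) + a + 1) (y (Fin.last k))) *
      (∑ j ∈ (Finset.Nat.antidiagonalTuple k a).filter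
            (fun j => ∀ i, j i ≤ n i.castSucc),
          ((a.factorial : ℝ) / ∏ i, ((j i).factorial : ℝ)) *
          ∏ i, ((α i.castSucc - 2 * y i.castSucc) ^ (j i) /
              ((n i.castSucc - j i).factorial : ℝ)) *
            eulerH (α i.castSucc) (n i.castSucc - j i) (y i.castSucc))) * hsign
end

section
/- Let b_1, b_2 be nonzero real numbers and m, n nonnegative integers. Then for every real x: Σ_{a=0}^{n} (−1)^a C(m+n+1, n−a) b_1^a b_2^{−a−1} E_{n−a}(b_1 x) E_{m+a+1}(b_2 x) − Σ_{a=0}^{m} (−1)^a C(m+n+1, m−a) b_2^a b_1^{−a−1} E_{m−a}(b_2 x) E_{n+a+1}(b_1 x) = ((−1)^m/(b_1^{m+1} b_2^{n+1})) Σ_{a=0}^{m+n+1} C(m+n+1, a) b_1^a b_2^{m+n+1−a} E_{m+n+1−a}(0) E_a(0) − 2 ((−b_2)^m / b_1^{m+1}) E_{m+n+1}(0). -/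
open scoped ContDiff
open Finset

noncomputable section AuxEuler

/-- base generating function -/
noncomputable def auxf (z : ℝ) : ℝ → ℝ := fun u => 2/(Real.exp u + 1) * Real.exp (u*z)

lemma contDiff_auxf (z : ℝ) : ContDiff ℝ ∞ (auxf z) := by
  apply ContDiff.mul
  · exact contDiff_const.div (Real.contDiff_exp.add contDiff_const) (fun u => by positivity)
  · exact (contDiff_id.mul contDiff_const).exp

lemma contDiff_auxfE (c z : ℝ) : ContDiff ℝ ∞ (fun u => auxf z (c * u)) :=
  (contDiff_auxf z).comp (contDiff_const.mul contDiff_id)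

lemma itd_lt_top (k : ℕ) : (k : WithTop ℕ∞) < ∞ := by exact_mod_cast (by simp : (k:ℕ∞) < ⊤)

lemma cd_nat {h : ℝ → ℝ} (hh : ContDiff ℝ ∞ h) (k : ℕ) : ContDiff ℝ k h :=
  hh.of_le (by exact_mod_cast le_top)

lemma D_auxfE (c z : ℝ) (k : ℕ) :
    iteratedDeriv k (fun u => auxf z (c * u)) 0 = c ^ k * iteratedDeriv k (auxf z) 0 := by
  rw [iteratedDeriv_comp_const_mul (cd_nat (contDiff_auxf z) k) c]
  simp

lemma hasDerivAt_itd {h : ℝ → ℝ} (hh : ContDiff ℝ ∞ h) (k : ℕ) (y : ℝ) :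
    HasDerivAt (iteratedDeriv k h) (iteratedDeriv (k+1) h y) y := by
  have hd : Differentiable ℝ (iteratedDeriv k h) :=
    hh.differentiable_iteratedDeriv k (itd_lt_top _)
  rw [iteratedDeriv_succ]
  exact (hd y).hasDerivAt

/-- Leibniz rule for iterated derivatives. -/
theorem itd_mul {f g : ℝ → ℝ} (hf : ContDiff ℝ ∞ f) (hg : ContDiff ℝ ∞ g) (n : ℕ) (x : ℝ) :
    iteratedDeriv n (fun u => f u * g u) x
      = ∑ a ∈ range (n+1), (n.choose a : ℝ) * iteratedDeriv a f x * iteratedDeriv (n-a) g x := by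
  induction n generalizing x with
  | zero => simp
  | succ n ih =>
    have hstep : iteratedDeriv (n+1) (fun u => f u * g u) x
        = deriv (fun y => ∑ a ∈ range (n+1),
            (n.choose a : ℝ) * iteratedDeriv a f y * iteratedDeriv (n-a) g y) x := by
      rw [iteratedDeriv_succ]
      congr 1
      funext y
      exact ih y
    have hder : HasDerivAt (fun y => ∑ a ∈ range (n+1),
          (n.choose a : ℝ) * iteratedDeriv a f y * iteratedDeriv (n-a) g y)
        (∑ a ∈ range (n+1), (n.choose a : ℝ) *
          (iteratedDeriv (a+1) f x * iteratedDeriv (n-a) g x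
            + iteratedDeriv a f x * iteratedDeriv (n-a+1) g x)) x := by
      apply HasDerivAt.fun_sum
      intro a _
      have h1 := (hasDerivAt_itd hf a x).mul (hasDerivAt_itd hg (n-a) x)
      have h2 := h1.const_mul ((n.choose a : ℝ))
      simpa [mul_assoc, mul_add] using h2
    rw [hstep, hder.deriv]
    have expand : ∑ a ∈ range (n+1), (n.choose a : ℝ) *
          (iteratedDeriv (a+1) f x * iteratedDeriv (n-a) g x
            + iteratedDeriv a f x * iteratedDeriv (n-a+1) g x)
        = (∑ a ∈ range (n+1), (n.choose a : ℝ) * iteratedDeriv (a+1) f x * iteratedDeriv (n-a) g x)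
        + ∑ a ∈ range (n+1), (n.choose a : ℝ) * iteratedDeriv a f x * iteratedDeriv (n-a+1) g x := by
      rw [← Finset.sum_add_distrib]; apply Finset.sum_congr rfl; intros; ring
    rw [expand]
    rw [Finset.sum_range_succ' (fun a => (n.choose a : ℝ) * iteratedDeriv a f x * iteratedDeriv (n-a+1) g x) n]
    rw [Finset.sum_range_succ (fun a => (n.choose a : ℝ) * iteratedDeriv (a+1) f x * iteratedDeriv (n-a) g x) n]
    rw [Finset.sum_range_succ' (fun a => ((n+1).choose a : ℝ) * iteratedDeriv a f x * iteratedDeriv (n+1-a) g x) (n+1)]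
    rw [Finset.sum_range_succ (fun a => ((n+1).choose (a+1) : ℝ) * iteratedDeriv (a+1) f x * iteratedDeriv (n+1-(a+1)) g x) n]
    have key : ∀ a ∈ range n, ((n+1).choose (a+1) : ℝ) * iteratedDeriv (a+1) f x * iteratedDeriv (n+1-(a+1)) g x
        = (n.choose (a+1) : ℝ) * iteratedDeriv (a+1) f x * iteratedDeriv (n-(a+1)+1) g x
          + (n.choose a : ℝ) * iteratedDeriv (a+1) f x * iteratedDeriv (n-a) g x := by
      intro a ha
      have ha' : a < n := Finset.mem_range.1 ha
      have h1 : n + 1 - (a+1) = n - a := by omega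
      have h2 : n - (a+1) + 1 = n - a := by omega
      rw [h1, h2, Nat.choose_succ_succ n a]
      push_cast
      ring
    rw [Finset.sum_congr rfl key, Finset.sum_add_distrib]
    simp [Nat.choose_self, Nat.sub_self, Nat.choose_zero_right]
    ring

/-- subtraction of iterated derivatives at a point -/
lemma itd_sub {f g : ℝ → ℝ} (hf : ContDiff ℝ ∞ f) (hg : ContDiff ℝ ∞ g) (n : ℕ) (x : ℝ) :
    iteratedDeriv n (fun u => f u - g u) x = iteratedDeriv n f x - iteratedDeriv n g x := by
  have : (fun u => f u - g u) = f - g := rfl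
  rw [this, ← iteratedDerivWithin_univ, ← iteratedDerivWithin_univ (f := f),
    ← iteratedDerivWithin_univ (f := g)]
  exact iteratedDerivWithin_sub (Set.mem_univ x) uniqueDiffOn_univ
    (cd_nat hf n).contDiffWithinAt (cd_nat hg n).contDiffWithinAt

lemma itd_add {f g : ℝ → ℝ} (hf : ContDiff ℝ ∞ f) (hg : ContDiff ℝ ∞ g) (n : ℕ) (x : ℝ) :
    iteratedDeriv n (fun u => f u + g u) x = iteratedDeriv n f x + iteratedDeriv n g x := by
  have : (fun u => f u + g u) = f + g := rfl
  rw [this, ← iteratedDerivWithin_univ, ← iteratedDerivWithin_univ (f := f),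
    ← iteratedDerivWithin_univ (f := g)]
  exact iteratedDerivWithin_add (Set.mem_univ x) uniqueDiffOn_univ
    (cd_nat hf n).contDiffWithinAt (cd_nat hg n).contDiffWithinAt

lemma itd_cmul {f : ℝ → ℝ} (hf : ContDiff ℝ ∞ f) (c : ℝ) (n : ℕ) (x : ℝ) :
    iteratedDeriv n (fun u => c * f u) x = c * iteratedDeriv n f x := by
  rw [← iteratedDerivWithin_univ, ← iteratedDerivWithin_univ (f := f)]
  exact iteratedDerivWithin_const_mul (Set.mem_univ x) uniqueDiffOn_univ c
    (cd_nat hf n).contDiffWithinAt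

/-- an even function has vanishing odd iterated derivatives at 0 -/
lemma odd_vanish {ψ : ℝ → ℝ} (hsym : ∀ u, ψ (-u) = ψ u) {N : ℕ} (hN : Odd N) :
    iteratedDeriv N ψ 0 = 0 := by
  have h := iteratedDeriv_comp_neg N ψ 0
  have h2 : (fun u => ψ (-u)) = ψ := funext hsym
  rw [h2, neg_zero, hN.neg_one_pow] at h
  simp only [smul_eq_mul, neg_one_mul] at h
  linarith

/-- Euler numbers at even index ≥ 1 vanish -/
lemma ek_even_zero {k : ℕ} (hk : Even k) (h1 : 1 ≤ k) : iteratedDeriv k (auxf 0) 0 = 0 := by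
  have hfun : (fun u => auxf 0 (-u)) = (fun u => 2 + -(auxf 0 u)) := by
    funext u
    have he : (0:ℝ) < Real.exp u := Real.exp_pos u
    show 2/(Real.exp (-u) + 1) * Real.exp (-u*0) = 2 + -(2/(Real.exp u + 1) * Real.exp (u*0))
    rw [Real.exp_neg]
    have h2 : (Real.exp u)⁻¹ + 1 ≠ 0 := by positivity
    have h3 : Real.exp u + 1 ≠ 0 := by positivity
    simp only [mul_zero, neg_mul, neg_zero, Real.exp_zero, mul_one]
    field_simp
    ring
  have hA : iteratedDeriv k (fun u => auxf 0 (-u)) 0 = iteratedDeriv k (auxf 0) 0 := by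
    rw [iteratedDeriv_comp_neg, neg_zero, hk.neg_one_pow]
    simp
  have hB : iteratedDeriv k (fun u => 2 + -(auxf 0 u)) 0 = -(iteratedDeriv k (auxf 0) 0) := by
    rw [← iteratedDerivWithin_univ]
    rw [iteratedDerivWithin_const_add (by omega) (2:ℝ)]
    rw [iteratedDerivWithin_univ, iteratedDeriv_fun_neg]
  rw [hfun, hB] at hA
  linarith

end AuxEuler

section Main

lemma auxf0_apply (w : ℝ) : auxf 0 w = 2/(Real.exp w + 1) := by simp [auxf]

lemma zpow_neg_nat (b : ℝ) (a : ℕ) : b ^ (-(a:ℤ)-1) = (b^(a+1))⁻¹ := by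
  rw [show (-(a:ℤ)-1) = -((a+1 : ℕ):ℤ) by push_cast; ring, zpow_neg, zpow_natCast]

lemma sgn_sub {j n : ℕ} (h : j ≤ n) : ((-1:ℝ))^n * (-1)^j = (-1)^(n-j) := by
  rw [← pow_add, show n+j = (n-j)+2*j from by omega, pow_add, pow_mul]
  norm_num

lemma sgn_sq (n : ℕ) : ((-1:ℝ))^n * (-1)^n = 1 := by
  rw [← pow_add]
  exact Even.neg_one_pow ⟨n, rfl⟩

lemma GH_pointwise (b1 b2 x u : ℝ) :
    auxf (b1*x) ((-b2)*u) * auxf (b2*x) (b1*u) + auxf 0 (b1*u) * auxf 0 (b2*u)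
      = 2 * auxf 0 (b1*u) := by
  have ha : (0:ℝ) < Real.exp (b2*u) := Real.exp_pos _
  have hc : (0:ℝ) < Real.exp (b1*u) := Real.exp_pos _
  have hexp : Real.exp ((-(b2*u))*(b1*x)) * Real.exp ((b1*u)*(b2*x)) = 1 := by
    rw [← Real.exp_add, show (-(b2*u))*(b1*x) + (b1*u)*(b2*x) = 0 from by ring, Real.exp_zero]
  show (2/(Real.exp ((-b2)*u) + 1) * Real.exp (((-b2)*u)*(b1*x)))
      * (2/(Real.exp (b1*u) + 1) * Real.exp ((b1*u)*(b2*x)))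
      + auxf 0 (b1*u) * auxf 0 (b2*u) = 2 * auxf 0 (b1*u)
  rw [auxf0_apply, auxf0_apply, show (-b2)*u = -(b2*u) from by ring, Real.exp_neg]
  have h1 : (Real.exp (b2*u))⁻¹ + 1 ≠ 0 := by positivity
  have h2 : Real.exp (b1*u) + 1 ≠ 0 := by positivity
  have h3 : Real.exp (b2*u) + 1 ≠ 0 := by positivity
  have collapse : (2/((Real.exp (b2*u))⁻¹ + 1) * Real.exp (-(b2*u)*(b1*x)))
      * (2/(Real.exp (b1*u) + 1) * Real.exp ((b1*u)*(b2*x)))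
      = (2/((Real.exp (b2*u))⁻¹ + 1)) * (2/(Real.exp (b1*u) + 1)) := by
    rw [show (2/((Real.exp (b2*u))⁻¹ + 1) * Real.exp (-(b2*u)*(b1*x)))
      * (2/(Real.exp (b1*u) + 1) * Real.exp ((b1*u)*(b2*x)))
      = (2/((Real.exp (b2*u))⁻¹ + 1)) * (2/(Real.exp (b1*u) + 1))
        * (Real.exp (-(b2*u)*(b1*x)) * Real.exp ((b1*u)*(b2*x))) from by ring]
    rw [hexp, mul_one]
  rw [collapse]
  field_simp
  ring

lemma Hsym_pointwise (b1 b2 u : ℝ) :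
    auxf 0 (b1 * -u) * auxf 0 (b2 * -u) - (auxf 0 (b1 * -u) + auxf 0 (b2 * -u))
      = auxf 0 (b1*u) * auxf 0 (b2*u) - (auxf 0 (b1*u) + auxf 0 (b2*u)) := by
  have ha : (0:ℝ) < Real.exp (b1*u) := Real.exp_pos _
  have hb : (0:ℝ) < Real.exp (b2*u) := Real.exp_pos _
  rw [auxf0_apply, auxf0_apply, auxf0_apply, auxf0_apply,
    show b1 * -u = -(b1*u) from by ring, show b2 * -u = -(b2*u) from by ring,
    Real.exp_neg, Real.exp_neg]
  have h1 : (Real.exp (b1*u))⁻¹ + 1 ≠ 0 := by positivity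
  have h2 : (Real.exp (b2*u))⁻¹ + 1 ≠ 0 := by positivity
  have h3 : Real.exp (b1*u) + 1 ≠ 0 := by positivity
  have h4 : Real.exp (b2*u) + 1 ≠ 0 := by positivity
  field_simp
  ring

end Main

noncomputable def ek (k : ℕ) (z : ℝ) : ℝ := iteratedDeriv k (auxf z) 0

lemma D_ek (c z : ℝ) (k : ℕ) :
    iteratedDeriv k (fun u => auxf z (c * u)) 0 = c ^ k * ek k z := D_auxfE c z k

lemma eulerH_one (k : ℕ) (z : ℝ) : eulerH 1 k z = ek k z := by
  unfold eulerH ek auxf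
  congr 1
  funext u
  rw [Real.rpow_one]

theorem stmt_12 (b₁ b₂ : ℝ) (hb₁ : b₁ ≠ 0) (hb₂ : b₂ ≠ 0) (m n : ℕ) (x : ℝ) :
    (∑ a ∈ Finset.range (n + 1), (-1 : ℝ) ^ a * (Nat.choose (m + n + 1) (n - a) : ℝ) *
        b₁ ^ a * b₂ ^ (-(a : ℤ) - 1) * eulerH 1 (n - a) (b₁ * x) * eulerH 1 (m + a + 1) (b₂ * x))
      - (∑ a ∈ Finset.range (m + 1), (-1 : ℝ) ^ a * (Nat.choose (m + n + 1) (m - a) : ℝ) *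
        b₂ ^ a * b₁ ^ (-(a : ℤ) - 1) * eulerH 1 (m - a) (b₂ * x) * eulerH 1 (n + a + 1) (b₁ * x))
    = ((-1 : ℝ) ^ m / (b₁ ^ (m + 1) * b₂ ^ (n + 1))) *
        (∑ a ∈ Finset.range (m + n + 2), (Nat.choose (m + n + 1) a : ℝ) *
          b₁ ^ a * b₂ ^ (m + n + 1 - a) * eulerH 1 (m + n + 1 - a) 0 * eulerH 1 a 0)
      - 2 * ((-b₂) ^ m / b₁ ^ (m + 1)) * eulerH 1 (m + n + 1) 0 := by
  simp only [eulerH_one]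
  -- abbreviations
  set K : ℝ := (-1:ℝ)^n * (b₁^(m+1))⁻¹ * (b₂^(n+1))⁻¹ with hK
  set t : ℕ → ℝ := fun j => ((m+n+1).choose j : ℝ) * ((-b₂)^j * ek j (b₁*x))
      * (b₁^(m+n+1-j) * ek (m+n+1-j) (b₂*x)) with ht
  -- Leibniz for G
  have hDG : iteratedDeriv (m+n+1) (fun u => auxf (b₁*x) ((-b₂)*u) * auxf (b₂*x) (b₁*u)) 0
      = ∑ j ∈ Finset.range (m+n+2), t j := by
    have h1 : iteratedDeriv (m+n+1) (fun u => auxf (b₁*x) ((-b₂)*u) * auxf (b₂*x) (b₁*u)) 0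
        = ∑ j ∈ Finset.range (m+n+1+1), ((m+n+1).choose j : ℝ)
            * iteratedDeriv j (fun u => auxf (b₁*x) ((-b₂)*u)) 0
            * iteratedDeriv (m+n+1-j) (fun u => auxf (b₂*x) (b₁*u)) 0 :=
      itd_mul (contDiff_auxfE _ _) (contDiff_auxfE _ _) (m+n+1) 0
    rw [h1]
    refine Finset.sum_congr rfl fun j _ => ?_
    rw [D_ek, D_ek, ht]
  -- Leibniz for H
  have hDH : iteratedDeriv (m+n+1) (fun u => auxf 0 (b₁*u) * auxf 0 (b₂*u)) 0
      = ∑ a ∈ Finset.range (m+n+2), ((m+n+1).choose a : ℝ)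
          * (b₁^a * ek a 0) * (b₂^(m+n+1-a) * ek (m+n+1-a) 0) := by
    have h1 : iteratedDeriv (m+n+1) (fun u => auxf 0 (b₁*u) * auxf 0 (b₂*u)) 0
        = ∑ a ∈ Finset.range (m+n+1+1), ((m+n+1).choose a : ℝ)
            * iteratedDeriv a (fun u => auxf 0 (b₁*u)) 0
            * iteratedDeriv (m+n+1-a) (fun u => auxf 0 (b₂*u)) 0 :=
      itd_mul (contDiff_auxfE _ _) (contDiff_auxfE _ _) (m+n+1) 0
    rw [h1]
    refine Finset.sum_congr rfl fun a _ => ?_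
    rw [D_ek, D_ek]
  -- G = 2*(2/(e^{b1 u}+1)) - H
  have hGHrel : iteratedDeriv (m+n+1) (fun u => auxf (b₁*x) ((-b₂)*u) * auxf (b₂*x) (b₁*u)) 0
      = 2 * (b₁^(m+n+1) * ek (m+n+1) 0)
        - iteratedDeriv (m+n+1) (fun u => auxf 0 (b₁*u) * auxf 0 (b₂*u)) 0 := by
    have hfun : (fun u => auxf (b₁*x) ((-b₂)*u) * auxf (b₂*x) (b₁*u))
        = fun u => (2 * auxf 0 (b₁*u)) - (auxf 0 (b₁*u) * auxf 0 (b₂*u)) := by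
      funext u
      have h := GH_pointwise b₁ b₂ x u
      linarith
    have h2 : iteratedDeriv (m+n+1)
          (fun u => (2 * auxf 0 (b₁*u)) - (auxf 0 (b₁*u) * auxf 0 (b₂*u))) 0
        = iteratedDeriv (m+n+1) (fun u => 2 * auxf 0 (b₁*u)) 0
          - iteratedDeriv (m+n+1) (fun u => auxf 0 (b₁*u) * auxf 0 (b₂*u)) 0 :=
      itd_sub (contDiff_const.mul (contDiff_auxfE b₁ 0))
        ((contDiff_auxfE b₁ 0).mul (contDiff_auxfE b₂ 0)) _ 0
    have h3 : iteratedDeriv (m+n+1) (fun u => 2 * auxf 0 (b₁*u)) 0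
        = 2 * (b₁^(m+n+1) * ek (m+n+1) 0) := by
      have h4 := itd_cmul (contDiff_auxfE b₁ 0) 2 (m+n+1) 0
      rw [h4, D_ek]
    rw [hfun, h2, h3]
  -- odd case value of H
  have hDHodd : Odd (m+n+1) → iteratedDeriv (m+n+1) (fun u => auxf 0 (b₁*u) * auxf 0 (b₂*u)) 0
      = (b₁^(m+n+1) + b₂^(m+n+1)) * ek (m+n+1) 0 := by
    intro hO
    have hsym : ∀ u, (fun u => (auxf 0 (b₁*u) * auxf 0 (b₂*u))
        - (auxf 0 (b₁*u) + auxf 0 (b₂*u))) (-u)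
        = (fun u => (auxf 0 (b₁*u) * auxf 0 (b₂*u)) - (auxf 0 (b₁*u) + auxf 0 (b₂*u))) u := by
      intro u
      simp only
      exact Hsym_pointwise b₁ b₂ u
    have h0 := odd_vanish (ψ := fun u => (auxf 0 (b₁*u) * auxf 0 (b₂*u))
        - (auxf 0 (b₁*u) + auxf 0 (b₂*u))) hsym hO
    have hspl : iteratedDeriv (m+n+1) (fun u => (auxf 0 (b₁*u) * auxf 0 (b₂*u))
          - (auxf 0 (b₁*u) + auxf 0 (b₂*u))) 0
        = iteratedDeriv (m+n+1) (fun u => auxf 0 (b₁*u) * auxf 0 (b₂*u)) 0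
          - (b₁^(m+n+1) * ek (m+n+1) 0 + b₂^(m+n+1) * ek (m+n+1) 0) := by
      have hs := itd_sub ((contDiff_auxfE b₁ 0).mul (contDiff_auxfE b₂ 0))
        ((contDiff_auxfE b₁ 0).add (contDiff_auxfE b₂ 0)) (m+n+1) 0
      have ha := itd_add (contDiff_auxfE b₁ 0) (contDiff_auxfE b₂ 0) (m+n+1) 0
      rw [hs, ha, D_ek, D_ek]
    rw [hspl] at h0
    linarith
  -- claim 1
  have claim1 : (∑ a ∈ Finset.range (n + 1), (-1 : ℝ) ^ a * (Nat.choose (m + n + 1) (n - a) : ℝ) *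
        b₁ ^ a * b₂ ^ (-(a : ℤ) - 1) * ek (n - a) (b₁ * x) * ek (m + a + 1) (b₂ * x))
      = ∑ j ∈ Finset.range (n+1), K * t j := by
    rw [← Finset.sum_range_reflect (fun a => (-1 : ℝ) ^ a * (Nat.choose (m + n + 1) (n - a) : ℝ) *
        b₁ ^ a * b₂ ^ (-(a : ℤ) - 1) * ek (n - a) (b₁ * x) * ek (m + a + 1) (b₂ * x)) (n+1)]
    refine Finset.sum_congr rfl fun j hj => ?_
    have hjn : j ≤ n := by have := Finset.mem_range.mp hj; omega
    rw [show n+1-1-j = n-j from by omega, show n-(n-j) = j from by omega,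
      show m+(n-j)+1 = m+n+1-j from by omega, zpow_neg_nat, ht, hK]
    dsimp only
    rw [show ((-b₂):ℝ)^j = (-1)^j * b₂^j from by rw [neg_pow]]
    rw [show (b₁:ℝ)^(m+n+1-j) = b₁^(n-j) * b₁^(m+1) from by
      rw [← pow_add]; congr 1; omega]
    rw [← sgn_sub hjn]
    rw [show (b₂:ℝ)^(n+1) = b₂^(n-j+1) * b₂^j from by
      rw [← pow_add]; congr 1; omega]
    field_simp
  -- claim 2
  have claim2 : (∑ a ∈ Finset.range (m + 1), (-1 : ℝ) ^ a * (Nat.choose (m + n + 1) (m - a) : ℝ) *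
        b₂ ^ a * b₁ ^ (-(a : ℤ) - 1) * ek (m - a) (b₂ * x) * ek (n + a + 1) (b₁ * x))
      = -∑ j ∈ Finset.Ico (n+1) (m+n+2), K * t j := by
    rw [Finset.sum_Ico_eq_sum_range, show m+n+2-(n+1) = m+1 from by omega,
      ← Finset.sum_neg_distrib]
    refine Finset.sum_congr rfl fun a ha => ?_
    have ham : a ≤ m := Nat.lt_succ_iff.mp (Finset.mem_range.mp ha)
    rw [ht, hK]
    dsimp only
    rw [show m+n+1-(n+1+a) = m-a from by omega, show n+1+a = n+a+1 from by omega]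
    rw [show (m+n+1).choose (n+a+1) = (m+n+1).choose (m-a) from by
      rw [show m-a = m+n+1-(n+a+1) from by omega]; exact (Nat.choose_symm (by omega)).symm]
    rw [zpow_neg_nat]
    rw [show ((-b₂):ℝ)^(n+a+1) = (-1)^(n+a+1) * b₂^(n+a+1) from by rw [neg_pow]]
    have hsgn : ((-1:ℝ))^n * (-1)^(n+a+1) = -(-1)^a := by
      rw [← pow_add, show n+(n+a+1) = a+1+2*n from by ring, pow_add, pow_mul, pow_succ]
      norm_num
    have hre : -((-1:ℝ)^n * (b₁^(m+1))⁻¹ * (b₂^(n+1))⁻¹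
          * (((m+n+1).choose (m-a) : ℝ) * ((-1)^(n+a+1) * b₂^(n+a+1) * ek (n+a+1) (b₁*x))
            * (b₁^(m-a) * ek (m-a) (b₂*x))))
        = ((-1:ℝ)^n * (-1)^(n+a+1)) * (-(((b₁^(m+1))⁻¹ * (b₂^(n+1))⁻¹)
          * (((m+n+1).choose (m-a) : ℝ) * (b₂^(n+a+1) * ek (n+a+1) (b₁*x))
            * (b₁^(m-a) * ek (m-a) (b₂*x))))) := by ring
    rw [hre, hsgn]
    rw [show (b₂:ℝ)^(n+a+1) = b₂^(n+1) * b₂^a from by rw [← pow_add]; congr 1; omega]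
    rw [show (b₁:ℝ)^(m+1) = b₁^(m-a) * b₁^(a+1) from by rw [← pow_add]; congr 1; omega]
    field_simp
  -- split the full sum
  have hsplit : ∑ j ∈ Finset.range (m+n+2), K * t j
      = (∑ j ∈ Finset.range (n+1), K * t j) + ∑ j ∈ Finset.Ico (n+1) (m+n+2), K * t j := by
    simp only [Finset.range_eq_Ico]
    exact (Finset.sum_Ico_consecutive _ (by omega) (by omega)).symm
  rw [claim1, claim2, sub_neg_eq_add, ← hsplit, ← Finset.mul_sum, ← hDG, hGHrel]
  -- identify the RHS sum with DH
  have hSig : (∑ a ∈ Finset.range (m + n + 2), (Nat.choose (m + n + 1) a : ℝ) *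
        b₁ ^ a * b₂ ^ (m + n + 1 - a) * ek (m + n + 1 - a) 0 * ek a 0)
      = iteratedDeriv (m+n+1) (fun u => auxf 0 (b₁*u) * auxf 0 (b₂*u)) 0 := by
    rw [hDH]
    exact Finset.sum_congr rfl fun a _ => by ring
  rw [hSig]
  set DH := iteratedDeriv (m+n+1) (fun u => auxf 0 (b₁*u) * auxf 0 (b₂*u)) 0 with hDHdef
  set eN := ek (m+n+1) 0 with heN
  rw [show ((-b₂):ℝ)^m = (-1)^m * b₂^m from by rw [neg_pow]]
  rcases Nat.even_or_odd (m+n+1) with hEv | hOdd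
  · -- even case : eN = 0
    have e0 : eN = 0 := ek_even_zero hEv (by omega)
    have hmn : ((-1:ℝ))^(m+n) = -1 :=
      Odd.neg_one_pow (Nat.not_even_iff_odd.mp (by
        intro h; exact (Nat.even_add_one.mp hEv) h))
    have hsm : (-1:ℝ)^m * (-1)^n = -1 := by rw [← pow_add]; exact hmn
    have hm' : ((-1:ℝ))^m = -(-1)^n := by
      calc ((-1:ℝ))^m = (-1)^m * ((-1)^n * (-1)^n) := by rw [sgn_sq]; ring
        _ = ((-1)^m * (-1)^n) * (-1)^n := by ring
        _ = -(-1)^n := by rw [hsm]; ring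
    rw [e0, hm', hK]
    field_simp
    ring
  · -- odd case
    have hDH' : DH = (b₁^(m+n+1) + b₂^(m+n+1)) * eN := hDHodd hOdd
    have h1 : ¬ Even (m+n+1) := Nat.not_even_iff_odd.mpr hOdd
    have h2 : Even (m+n) := by
      by_contra h
      exact h1 (Nat.even_add_one.mpr h)
    have hmn : ((-1:ℝ))^(m+n) = 1 := Even.neg_one_pow h2
    have hsm : (-1:ℝ)^m * (-1)^n = 1 := by rw [← pow_add]; exact hmn
    have hm' : ((-1:ℝ))^m = (-1)^n := by
      calc ((-1:ℝ))^m = (-1)^m * ((-1)^n * (-1)^n) := by rw [sgn_sq]; ring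
        _ = ((-1)^m * (-1)^n) * (-1)^n := by ring
        _ = (-1)^n := by rw [hsm]; ring
    rw [hDH', hm', hK]
    rw [show (b₁:ℝ)^(m+n+1) = b₁^(m+1) * b₁^n from by rw [← pow_add]; congr 1; omega]
    rw [show (b₂:ℝ)^(m+n+1) = b₂^(n+1) * b₂^m from by rw [← pow_add]; congr 1; omega]
    field_simp
    ring
end
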